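/- Let Λ, Γ be Waterman sequences such that {Γ(n)/Λ(n)} is nondecreasing, let 1 ≤ q_n ≤ p, and let {I_j}_{j=1}^s be nonoverlapping intervals. Then for any f, ∑_{j=1}^s |f(I_j)|^{q_n}/γ_j ≤ (∑_{j=1}^s |f(I_j)|^p/λ_j)^{q_n/p} · max_{1≤k≤s} Γ(k) Λ(k)^{−q_n/p}. -/

import Mathlib

open Finset

private lemma abel_cheb (u v : ℕ → ℝ) (c : ℝ) :
    ∀ (s : ℕ), (∀ k, k ≤ s → ∑ j ∈ range k, u j ≤ c * ∑ j ∈ range k, v j) →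
    ∀ (b : ℕ → ℝ), (∀ j, j < s → 0 ≤ b j) → (∀ i j, i ≤ j → j < s → b j ≤ b i) →
    ∑ j ∈ range s, b j * u j ≤ c * ∑ j ∈ range s, b j * v j := by
  intro s
  induction s with
  | zero => simp
  | succ n ih =>
    intro hk b hb0 hbm
    have key : ∀ w : ℕ → ℝ, ∑ j ∈ range (n+1), b j * w j
        = ∑ j ∈ range n, (b j - b n) * w j + b n * ∑ j ∈ range (n+1), w j := by
      intro w
      simp only [sub_mul, Finset.sum_sub_distrib, Finset.sum_range_succ]
      rw [← Finset.mul_sum]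
      ring
    have hbn : 0 ≤ b n := hb0 n n.lt_succ_self
    have ihh := ih (fun k hk' => hk k (hk'.trans n.le_succ)) (fun j => b j - b n)
      (fun j hj => sub_nonneg.2 (hbm j n hj.le n.lt_succ_self))
      (fun i j hij hj => by
        have := hbm i j hij (hj.trans n.lt_succ_self)
        simpa using this)
    have h2 : b n * ∑ j ∈ range (n+1), u j ≤ b n * (c * ∑ j ∈ range (n+1), v j) :=
      mul_le_mul_of_nonneg_left (hk (n+1) le_rfl) hbn
    rw [key u, key v, mul_add]
    have : c * (b n * ∑ j ∈ range (n+1), v j) = b n * (c * ∑ j ∈ range (n+1), v j) := by ring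
    rw [this]
    exact add_le_add ihh h2


/-- The key estimate in the second part of Theorem 1.4: if `Λ, Γ` are nondecreasing
positive sequences with `Γ(n)/Λ(n)` nondecreasing and `1 ≤ r ≤ p` (with `r = qₙ`), then
for nonnegative reals `a₁ ≥ … ≥ a_s` (the values `|f(Iⱼ)|` arranged in nonincreasing
order), `∑ aⱼ^r/γⱼ ≤ (∑ aⱼ^p/λⱼ)^(r/p) · max_{1≤k≤s} Γ(k) Λ(k)^(-r/p)`. -/
theorem ratio_monotone_estimate (lam gam : ℕ → ℝ)
    (hlam : ∀ j, 0 < lam j) (hgam : ∀ j, 0 < gam j)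
    (hlammono : Monotone lam) (hgammono : Monotone gam)
    (hratio : Monotone (fun n =>
      (∑ j ∈ range (n + 1), 1 / gam j) / (∑ j ∈ range (n + 1), 1 / lam j)))
    (p r : ℝ) (hr : 1 ≤ r) (hrp : r ≤ p)
    (s : ℕ) (hs : 1 ≤ s) (a : ℕ → ℝ)
    (ha0 : ∀ j, j < s → 0 ≤ a j)
    (ham : ∀ i j, i ≤ j → j < s → a j ≤ a i) :
    ∑ j ∈ range s, a j ^ r / gam j ≤
      (∑ j ∈ range s, a j ^ p / lam j) ^ (r / p) *
        (Finset.Icc 1 s).sup' (Finset.nonempty_Icc.mpr hs)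
          (fun k => (∑ j ∈ range k, 1 / gam j) *
            (∑ j ∈ range k, 1 / lam j) ^ (-(r / p))) := by
  have hp0 : 0 < p := lt_of_lt_of_le one_pos (hr.trans hrp)
  have hr0 : 0 < r := lt_of_lt_of_le one_pos hr
  set t := r / p with ht_def
  have ht0 : 0 < t := div_pos hr0 hp0
  have ht1 : t ≤ 1 := (div_le_one hp0).2 hrp
  have hLpos : ∀ k, 1 ≤ k → 0 < ∑ j ∈ range k, 1 / lam j := fun k hk =>
    Finset.sum_pos (fun j _ => by have := hlam j; positivity)
      (nonempty_range_iff.2 (by omega))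
  have hGpos : ∀ k, 1 ≤ k → 0 < ∑ j ∈ range k, 1 / gam j := fun k hk =>
    Finset.sum_pos (fun j _ => by have := hgam j; positivity)
      (nonempty_range_iff.2 (by omega))
  have hGs := hGpos s hs
  have hLs := hLpos s hs
  set Gs := ∑ j ∈ range s, 1 / gam j
  set Ls := ∑ j ∈ range s, 1 / lam j
  set B := ∑ j ∈ range s, a j ^ p / lam j with hB_def
  have hB0 : 0 ≤ B :=
    Finset.sum_nonneg fun j hj =>
      div_nonneg (Real.rpow_nonneg (ha0 j (mem_range.1 hj)) p) (hlam j).le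
  -- ratio bound on partial sums
  have hc : ∀ k, k ≤ s → ∑ j ∈ range k, 1 / gam j ≤
      (Gs / Ls) * ∑ j ∈ range k, 1 / lam j := by
    intro k hk
    rcases Nat.eq_zero_or_pos k with h0 | h1
    · subst h0; simp
    · have h := hratio (show k - 1 ≤ s - 1 by omega)
      simp only at h
      have hk1 : k - 1 + 1 = k := by omega
      have hs1 : s - 1 + 1 = s := by omega
      rw [hk1, hs1] at h
      rw [div_le_div_iff₀ (hLpos k h1) hLs] at h
      rw [div_mul_eq_mul_div, le_div_iff₀ hLs]
      linarith
  -- Chebyshev-type step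
  have SB := abel_cheb (fun j => 1 / gam j) (fun j => 1 / lam j) (Gs / Ls) s hc
    (fun j => a j ^ p)
    (fun j hj => Real.rpow_nonneg (ha0 j hj) p)
    (fun i j hij hj => Real.rpow_le_rpow (ha0 j hj) (ham i j hij hj) hp0.le)
  simp only [mul_one_div] at SB
  -- SB : ∑ a^p/gam ≤ (Gs/Ls) * B
  -- Jensen step
  have hw : ∀ i ∈ range s, (0:ℝ) ≤ (1 / gam i) / Gs := fun i _ =>
    div_nonneg (div_nonneg one_pos.le (hgam i).le) hGs.le
  have hw' : ∑ i ∈ range s, (1 / gam i) / Gs = 1 := by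
    rw [← sum_div, div_self hGs.ne']
  have hz : ∀ i ∈ range s, (0:ℝ) ≤ (a i ^ p) ^ t := fun i hi =>
    Real.rpow_nonneg (Real.rpow_nonneg (ha0 i (mem_range.1 hi)) p) t
  have hp' : (1:ℝ) ≤ 1 / t := (le_div_iff₀ ht0).2 (by linarith)
  have J := Real.arith_mean_le_rpow_mean (range s) (fun i => (1 / gam i) / Gs)
    (fun i => (a i ^ p) ^ t) hw hw' hz hp'
  rw [one_div_one_div] at J
  have e0 : ∑ i ∈ range s, (1 / gam i) / Gs * (a i ^ p) ^ t
      = (∑ i ∈ range s, (a i ^ p) ^ t / gam i) / Gs := by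
    rw [eq_div_iff hGs.ne', Finset.sum_mul]
    exact Finset.sum_congr rfl fun i _ => by
      field_simp
  have e1 : ∑ i ∈ range s, (1 / gam i) / Gs * ((a i ^ p) ^ t) ^ (1 / t)
      = (∑ i ∈ range s, a i ^ p / gam i) / Gs := by
    rw [eq_div_iff hGs.ne', Finset.sum_mul]
    refine Finset.sum_congr rfl fun i hi => ?_
    rw [← Real.rpow_mul (Real.rpow_nonneg (ha0 i (mem_range.1 hi)) p),
      mul_one_div, div_self ht0.ne', Real.rpow_one]
    field_simp
  rw [e0, e1] at J
  have hmem : s ∈ Finset.Icc 1 s := mem_Icc.2 ⟨hs, le_rfl⟩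
  have hsum_nonneg : (0:ℝ) ≤ ∑ i ∈ range s, a i ^ p / gam i :=
    Finset.sum_nonneg fun i hi =>
      div_nonneg (Real.rpow_nonneg (ha0 i (mem_range.1 hi)) p) (hgam i).le
  calc ∑ j ∈ range s, a j ^ r / gam j
      = ∑ j ∈ range s, (a j ^ p) ^ t / gam j := by
        refine Finset.sum_congr rfl fun j hj => ?_
        rw [← Real.rpow_mul (ha0 j (mem_range.1 hj)), mul_comm,
          div_mul_cancel₀ r hp0.ne']
    _ = Gs * ((∑ i ∈ range s, (a i ^ p) ^ t / gam i) / Gs) := by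
        rw [mul_div_cancel₀ _ hGs.ne']
    _ ≤ Gs * ((∑ i ∈ range s, a i ^ p / gam i) / Gs) ^ t :=
        mul_le_mul_of_nonneg_left J hGs.le
    _ ≤ Gs * ((Gs / Ls * B) / Gs) ^ t := by
        refine mul_le_mul_of_nonneg_left ?_ hGs.le
        exact Real.rpow_le_rpow (div_nonneg hsum_nonneg hGs.le)
          (by gcongr) ht0.le

    _ = B ^ t * (Gs * Ls ^ (-t)) := by
        rw [show Gs / Ls * B / Gs = B / Ls by field_simp]
        rw [Real.div_rpow hB0 hLs.le, Real.rpow_neg hLs.le]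
        ring
    _ ≤ B ^ t * (Finset.Icc 1 s).sup' (Finset.nonempty_Icc.mpr hs)
          (fun k => (∑ j ∈ range k, 1 / gam j) *
            (∑ j ∈ range k, 1 / lam j) ^ (-t)) :=
        mul_le_mul_of_nonneg_left
          (Finset.le_sup' (fun k => (∑ j ∈ range k, 1 / gam j) *
            (∑ j ∈ range k, 1 / lam j) ^ (-t)) hmem) (Real.rpow_nonneg hB0 t)
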